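/- Let 0 < γ < 1/2 and define for v ∈ L²(0,T) the Riemann–Liouville integral (D^{-γ}v)(t) = (1/Γ(γ)) ∫₀^t (t-s)^(γ-1) v(s) ds. For the function v = τ^(-1)·1_{(T-τ,T)} (with 0 < τ ≤ T), the right-sided integral (D_{T-}^{-γ}v)(t) = (1/Γ(γ)) ∫_t^T (s-t)^(γ-1) v(s) ds satisfies ‖D_{T-}^{-γ} v‖_{L²(0,T)}² ≤ C_γ τ^(2γ-1) for a constant C_γ depending only on γ. -/

import Mathlib

open MeasureTheory Real

lemma aux_mvt {γ : ℝ} (hγ0 : 0 < γ) (hγ1 : γ < 1) {x τ : ℝ} (hx : 0 < x) (hτ : 0 ≤ τ) :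
    (x + τ) ^ γ - x ^ γ ≤ γ * (τ * x ^ (γ - 1)) := by
  have hint : (∫ s in x..(x+τ), s ^ (γ-1)) = ((x+τ) ^ γ - x ^ γ) / γ := by
    rw [integral_rpow (Or.inl (by linarith))]
    have h1 : γ - 1 + 1 = γ := by ring
    rw [h1]
  have hmono : (∫ s in x..(x+τ), s ^ (γ-1)) ≤ ∫ _ in x..(x+τ), x ^ (γ-1) := by
    apply intervalIntegral.integral_mono_on (by linarith)
    · exact intervalIntegral.intervalIntegrable_rpow' (by linarith)
    · exact intervalIntegrable_const
    · intro s hs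
      exact Real.rpow_le_rpow_of_nonpos hx hs.1 (by linarith)
  rw [hint, intervalIntegral.integral_const, smul_eq_mul] at hmono
  rw [div_le_iff₀ hγ0] at hmono
  calc (x + τ) ^ γ - x ^ γ ≤ (x + τ - x) * x ^ (γ - 1) * γ := hmono
    _ = γ * (τ * x ^ (γ - 1)) := by ring

lemma inner_eq {γ : ℝ} (hγ0 : 0 < γ) (hγ1 : γ < 1) (T τ t : ℝ) (hτ : 0 < τ) (ht : t ≤ T) :
    (∫ s in t..T, (s - t) ^ (γ - 1) * (if T - τ < s ∧ s < T then 1/τ else 0)) =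
      ((T - t) ^ γ - (max (T - τ - t) 0) ^ γ) / γ * (1/τ) := by
  set a := max t (T - τ) with ha
  have hta : t ≤ a := le_max_left _ _
  have haT : a ≤ T := max_le ht (by linarith)
  set f : ℝ → ℝ := fun s => (s - t) ^ (γ - 1) * (if T - τ < s ∧ s < T then 1/τ else 0) with hf
  -- first piece is zero
  have h1 : Set.EqOn f 0 (Set.uIcc t a) := by
    intro s hs
    rw [Set.uIcc_of_le hta] at hs
    rcases eq_or_lt_of_le hs.1 with h | h
    · have h0 : (s - t) ^ (γ - 1) = 0 := by
        rw [show s - t = 0 by linarith]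
        exact Real.zero_rpow (by intro hc; apply absurd hγ1; linarith)
      simp [hf, h0]
    · have hsa : s ≤ T - τ := by
        rcases le_total t (T - τ) with hc | hc
        · have he : a = T - τ := max_eq_right hc
          exact he ▸ hs.2
        · have he : a = t := max_eq_left hc
          have h2 := hs.2
          rw [he] at h2
          linarith
      simp [hf, not_lt.mpr hsa]
  have hi1 : (∫ s in t..a, f s) = 0 := by
    rw [intervalIntegral.integral_congr h1]; simp
  have hint1 : IntervalIntegrable f volume t a := by
    refine (intervalIntegrable_const (c := (0:ℝ))).congr_ae ?_
    filter_upwards [ae_restrict_mem measurableSet_uIoc] with s hs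
    exact (h1 (Set.uIoc_subset_uIcc hs)).symm
  -- second piece
  set g : ℝ → ℝ := fun s => (s - t) ^ (γ - 1) * (1/τ) with hg
  have hintg : IntervalIntegrable g volume a T := by
    have := (intervalIntegral.intervalIntegrable_rpow' (a := a - t) (b := T - t) (r := γ - 1)
      (by linarith)).comp_sub_right t
    simpa [hg] using this.mul_const (1/τ)
  have haeg : ∀ᵐ s : ℝ, s ∈ Set.uIoc a T → f s = g s := by
    have hT0 : (volume : Measure ℝ) {T} = 0 := measure_singleton T
    rw [ae_iff]
    refine measure_mono_null (fun s hs => ?_) hT0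
    simp only [Set.mem_setOf_eq, Classical.not_imp] at hs
    obtain ⟨hmem, hne⟩ := hs
    rw [Set.uIoc_of_le haT] at hmem
    by_contra hsT
    apply hne
    have hs1 : T - τ < s := lt_of_le_of_lt (le_max_right t (T - τ)) hmem.1
    have hs2 : s < T := lt_of_le_of_ne hmem.2 (fun h => hsT (by simp [h]))
    simp [hf, hg, hs1, hs2]
  have h2ae : f =ᵐ[volume.restrict (Set.uIoc a T)] g :=
    (ae_restrict_iff' measurableSet_uIoc).mpr haeg
  have hint2 : IntervalIntegrable f volume a T := hintg.congr_ae h2ae.symm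
  have hi2 : (∫ s in a..T, f s) = ((T - t) ^ γ - (a - t) ^ γ) / γ * (1/τ) := by
    rw [intervalIntegral.integral_congr_ae haeg]
    have : (∫ s in a..T, g s) = (∫ s in a..T, (s - t) ^ (γ - 1)) * (1/τ) := by
      rw [hg, intervalIntegral.integral_mul_const]
    rw [this]
    have hsub : (∫ s in a..T, (s - t) ^ (γ - 1)) = ∫ u in (a - t)..(T - t), u ^ (γ - 1) := by
      exact intervalIntegral.integral_comp_sub_right (fun u => u ^ (γ - 1)) t
    rw [hsub, integral_rpow (Or.inl (by linarith))]
    have h1 : γ - 1 + 1 = γ := by ring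
    rw [h1]
  have hsplit : (∫ s in t..T, f s) = (∫ s in t..a, f s) + ∫ s in a..T, f s :=
    (intervalIntegral.integral_add_adjacent_intervals hint1 hint2).symm
  have hamax : a - t = max (T - τ - t) 0 := by
    rcases le_total t (T - τ) with h | h
    · rw [ha, max_eq_right h, max_eq_left (show (0:ℝ) ≤ T - τ - t by linarith)]
    · rw [ha, max_eq_left h, max_eq_right (show T - τ - t ≤ 0 by linarith), sub_self]
  rw [hsplit, hi1, hi2, hamax, zero_add]

theorem stmt_19 (γ : ℝ) (hγ : γ ∈ Set.Ioo (0:ℝ) (1/2)) :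
    ∃ C > 0, ∀ T τ : ℝ, 0 < τ → τ ≤ T →
      (∫ t in (0:ℝ)..T,
        ((1 / Real.Gamma γ) *
          ∫ s in t..T, (s - t) ^ (γ - 1) * (if T - τ < s ∧ s < T then 1/τ else 0)) ^ 2) ≤
        C * τ ^ (2 * γ - 1) := by
  obtain ⟨hγ0, hγ2⟩ := hγ
  have hγ1 : γ < 1 := by linarith
  have h12 : 0 < 1 - 2 * γ := by linarith
  have hΓ : 0 < Real.Gamma γ := Real.Gamma_pos_of_pos hγ0
  refine ⟨(γ^2/(1-2*γ) + 2^(2*γ+1)) / (Real.Gamma γ * γ)^2, ?_, ?_⟩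
  · apply div_pos
    · have h1 : (0:ℝ) < 2 ^ (2*γ+1) := Real.rpow_pos_of_pos (by norm_num) _
      have h2 : (0:ℝ) ≤ γ^2/(1-2*γ) := div_nonneg (sq_nonneg γ) h12.le
      linarith
    · exact pow_pos (mul_pos hΓ hγ0) 2
  intro T τ hτ hτT
  have hT : 0 < T := lt_of_lt_of_le hτ hτT
  set D : ℝ → ℝ := fun t => (T - t) ^ γ - (max (T - τ - t) 0) ^ γ with hD
  set c : ℝ := 1 / (Real.Gamma γ * γ * τ) with hc
  have hout : Set.EqOn
      (fun t => ((1 / Real.Gamma γ) *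
        ∫ s in t..T, (s - t) ^ (γ - 1) * (if T - τ < s ∧ s < T then 1/τ else 0)) ^ 2)
      (fun t => c ^ 2 * (D t) ^ 2) (Set.uIcc 0 T) := by
    intro t ht
    rw [Set.uIcc_of_le hT.le] at ht
    simp only
    rw [inner_eq hγ0 hγ1 T τ t hτ ht.2, hD, hc]
    ring
  rw [intervalIntegral.integral_congr hout, intervalIntegral.integral_const_mul]
  -- continuity of D
  have hDc : Continuous D := by
    apply Continuous.sub
    · exact (Real.continuous_rpow_const hγ0.le).comp (continuous_const.sub continuous_id)
    · exact (Real.continuous_rpow_const hγ0.le).comp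
        ((continuous_const.sub continuous_id).max continuous_const)
  have hD2c : Continuous fun t => D t ^ 2 := hDc.pow 2
  set b : ℝ := max (T - 2*τ) 0 with hb
  have hb0 : 0 ≤ b := le_max_right _ _
  have hbT : b ≤ T := max_le (by linarith) hT.le
  have hTb : T - b ≤ 2*τ := by
    rw [hb]; rcases le_total (T - 2*τ) 0 with h | h
    · rw [max_eq_right h]; linarith
    · rw [max_eq_left h]; linarith
  -- nonnegativity of D on [0, T]
  have hDnn : ∀ t ∈ Set.Icc (0:ℝ) T, 0 ≤ D t := by
    intro t ht
    rw [hD]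
    simp only [sub_nonneg]
    apply Real.rpow_le_rpow (le_max_right _ _) _ hγ0.le
    exact max_le (by linarith [ht.2]) (by linarith [ht.2])
  -- split the integral
  have hsplit : (∫ t in (0:ℝ)..T, D t ^ 2) =
      (∫ t in (0:ℝ)..b, D t ^ 2) + ∫ t in b..T, D t ^ 2 :=
    (intervalIntegral.integral_add_adjacent_intervals
      (hD2c.intervalIntegrable _ _) (hD2c.intervalIntegrable _ _)).symm
  -- bound on [b, T]
  have hbound2 : (∫ t in b..T, D t ^ 2) ≤ (2*τ) ^ (2*γ) * (2*τ) := by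
    have hpt : ∀ t ∈ Set.Icc b T, D t ^ 2 ≤ (2*τ) ^ (2*γ) := by
      intro t ht
      have ht0 : (0:ℝ) ≤ t := le_trans hb0 ht.1
      have hDt : D t ≤ (2*τ) ^ γ := by
        rw [hD]
        have h1 : (T - t) ^ γ ≤ (2*τ) ^ γ := by
          apply Real.rpow_le_rpow (by linarith [ht.2]) _ hγ0.le
          have : T - 2*τ ≤ b := le_max_left _ _
          linarith [ht.1]
        have h2 : (0:ℝ) ≤ (max (T - τ - t) 0) ^ γ := Real.rpow_nonneg (le_max_right _ _) _
        simp only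
        linarith
      have hDt0 : 0 ≤ D t := hDnn t ⟨ht0, ht.2⟩
      calc D t ^ 2 ≤ ((2*τ) ^ γ) ^ 2 := by nlinarith
        _ = (2*τ) ^ (2*γ) := by
            rw [← Real.rpow_natCast ((2*τ) ^ γ) 2, ← Real.rpow_mul (by linarith)]
            norm_num [mul_comm]
    calc (∫ t in b..T, D t ^ 2) ≤ ∫ _ in b..T, (2*τ) ^ (2*γ) := by
          apply intervalIntegral.integral_mono_on hbT (hD2c.intervalIntegrable _ _)
            intervalIntegrable_const hpt
      _ = (T - b) * (2*τ) ^ (2*γ) := by rw [intervalIntegral.integral_const, smul_eq_mul]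
      _ ≤ (2*τ) ^ (2*γ) * (2*τ) := by
          have : (0:ℝ) ≤ (2*τ) ^ (2*γ) := Real.rpow_nonneg (by linarith) _
          nlinarith
  -- bound on [0, b]
  have hbound1 : (∫ t in (0:ℝ)..b, D t ^ 2) ≤ γ^2 * τ^2 * (τ ^ (2*γ-1) / (1 - 2*γ)) := by
    rcases eq_or_lt_of_le hb0 with hbz | hbpos
    · rw [← hbz, intervalIntegral.integral_same]
      have h1 : (0:ℝ) ≤ τ ^ (2*γ-1) / (1-2*γ) := div_nonneg (Real.rpow_nonneg hτ.le _) h12.le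
      positivity
    · have hbe : b = T - 2*τ := by
        rcases le_or_gt (T - 2*τ) 0 with h | h
        · exfalso; rw [hb, max_eq_right h] at hbpos; exact lt_irrefl 0 hbpos
        · rw [hb, max_eq_left h.le]
      have hpt : ∀ t ∈ Set.Icc (0:ℝ) b, D t ^ 2 ≤ γ^2 * τ^2 * (T - τ - t) ^ (2*γ-2) := by
        intro t ht
        have hx : 0 < T - τ - t := by rw [hbe] at ht; linarith [ht.2]
        have hxt : τ ≤ T - τ - t := by rw [hbe] at ht; linarith [ht.2]
        have hmax : max (T - τ - t) 0 = T - τ - t := max_eq_left hx.le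
        have hTt : T - t = (T - τ - t) + τ := by ring
        have hDle : D t ≤ γ * (τ * (T - τ - t) ^ (γ-1)) := by
          rw [hD]; simp only [hmax, hTt]
          exact aux_mvt hγ0 hγ1 hx hτ.le
        have hDt0 : 0 ≤ D t := hDnn t ⟨ht.1, le_trans ht.2 hbT⟩
        have hsq : (γ * (τ * (T - τ - t) ^ (γ-1))) ^ 2 = γ^2 * τ^2 * (T - τ - t) ^ (2*γ-2) := by
          have : ((T - τ - t) ^ (γ-1)) ^ 2 = (T - τ - t) ^ (2*γ-2) := by
            rw [← Real.rpow_natCast ((T - τ - t) ^ (γ-1)) 2, ← Real.rpow_mul hx.le]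
            norm_num; ring_nf
          rw [mul_pow, mul_pow, this]; ring
        nlinarith [Real.rpow_nonneg hx.le (γ-1)]
      have hcont : ContinuousOn (fun t => γ^2 * τ^2 * (T - τ - t) ^ (2*γ-2)) (Set.Icc 0 b) := by
        apply ContinuousOn.mul continuousOn_const
        apply ContinuousOn.rpow_const
        · exact (continuousOn_const.sub continuousOn_id)
        · intro t ht
          left
          have : 0 < T - τ - t := by rw [hbe] at ht; linarith [ht.2, hτ]
          exact ne_of_gt this
      have hri : IntervalIntegrable (fun t => γ^2 * τ^2 * (T - τ - t) ^ (2*γ-2)) volume 0 b := by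
        apply ContinuousOn.intervalIntegrable
        rwa [Set.uIcc_of_le hb0]
      calc (∫ t in (0:ℝ)..b, D t ^ 2)
          ≤ ∫ t in (0:ℝ)..b, γ^2 * τ^2 * (T - τ - t) ^ (2*γ-2) :=
            intervalIntegral.integral_mono_on hb0 (hD2c.intervalIntegrable _ _) hri hpt
        _ = γ^2 * τ^2 * ∫ t in (0:ℝ)..b, (T - τ - t) ^ (2*γ-2) := by
            rw [intervalIntegral.integral_const_mul]
        _ = γ^2 * τ^2 * ∫ u in (T - τ - b)..(T - τ - 0), u ^ (2*γ-2) := by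
            rw [intervalIntegral.integral_comp_sub_left (fun u => u ^ (2*γ-2)) (T - τ)]
        _ ≤ γ^2 * τ^2 * (τ ^ (2*γ-1) / (1 - 2*γ)) := by
            have hτTτ : τ ≤ T - τ := by rw [hbe] at hbpos; linarith
            have h0n : (0:ℝ) ∉ Set.uIcc (T - τ - b) (T - τ - 0) := by
              rw [hbe]
              have : T - τ - (T - 2*τ) = τ := by ring
              rw [this, sub_zero, Set.uIcc_of_le hτTτ]
              intro hmem
              exact absurd hmem.1 (not_le.mpr hτ)
            rw [integral_rpow (Or.inr ⟨by intro hcon; linarith, h0n⟩)]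
            have he : 2*γ - 2 + 1 = 2*γ - 1 := by ring
            rw [he]
            have hb' : T - τ - b = τ := by rw [hbe]; ring
            rw [hb', sub_zero]
            have hA : (0:ℝ) ≤ (T - τ) ^ (2*γ-1) := Real.rpow_nonneg (by linarith) _
            have hkey : ((T - τ) ^ (2*γ-1) - τ ^ (2*γ-1)) / (2*γ-1) ≤ τ ^ (2*γ-1) / (1-2*γ) := by
              have h1 : ((T - τ) ^ (2*γ-1) - τ ^ (2*γ-1)) / (2*γ-1)
                  = (τ ^ (2*γ-1) - (T - τ) ^ (2*γ-1)) / (1-2*γ) := by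
                rw [show (2*γ-1 : ℝ) = -(1-2*γ) by ring, div_neg, ← neg_div, neg_sub]
              rw [h1]
              exact (div_le_div_iff_of_pos_right h12).mpr (by linarith)
            exact mul_le_mul_of_nonneg_left hkey (by positivity)
  rw [hsplit]
  calc c^2 * ((∫ t in (0:ℝ)..b, D t ^ 2) + ∫ t in b..T, D t ^ 2)
      ≤ c^2 * (γ^2 * τ^2 * (τ ^ (2*γ-1) / (1 - 2*γ)) + (2*τ) ^ (2*γ) * (2*τ)) :=
        mul_le_mul_of_nonneg_left (add_le_add hbound1 hbound2) (sq_nonneg c)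
    _ = (γ^2/(1-2*γ) + 2^(2*γ+1)) / (Real.Gamma γ * γ)^2 * τ ^ (2*γ-1) := by
        have e1 : (2*τ) ^ (2*γ) = 2 ^ (2*γ) * τ ^ (2*γ) := Real.mul_rpow (by norm_num) hτ.le
        have e2 : τ ^ (2*γ) = τ * τ ^ (2*γ-1) := by
          rw [show (2*γ) = 1 + (2*γ-1) by ring, Real.rpow_add hτ, Real.rpow_one]
          ring_nf
        have e3 : (2:ℝ) ^ (2*γ+1) = 2 ^ (2*γ) * 2 := by
          rw [Real.rpow_add (by norm_num : (0:ℝ) < 2), Real.rpow_one]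
        rw [hc, e1, e2, e3]
        have hτ' : τ ≠ 0 := ne_of_gt hτ
        have hΓ' : Real.Gamma γ ≠ 0 := ne_of_gt hΓ
        have hγ' : γ ≠ 0 := ne_of_gt hγ0
        have h12' : (1-2*γ) ≠ 0 := ne_of_gt h12
        field_simp
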